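/- For every μ > 0, ξ ∈ ℝ, and x ∈ ℝ, the principal-value limit defining (−Δ)^{1/2}𝒰_{μ,ξ}(x), where 𝒰_{μ,ξ}(y) := log( 2μ/(μ² + (y−ξ)²) ), exists and equals e^{𝒰_{μ,ξ}(x)} = 2μ/(μ² + (x−ξ)²). In other words, each bubble 𝒰_{μ,ξ} is a classical solution of the Liouville equation (−Δ)^{1/2}u = e^u on ℝ. -/

import Mathlib

open MeasureTheory Filter Set

/-- The truncated integral appearing in the principal-value definition of the
half-Laplacian: `(1/π) ∫_{|z| ≥ δ} (u(x) - u(x+z))/z² dz`. -/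
noncomputable def pvHalfLap (u : ℝ → ℝ) (x δ : ℝ) : ℝ :=
  (1 / Real.pi) * ∫ z in {z : ℝ | δ ≤ |z|}, (u x - u (x + z)) / z ^ 2

/-- `HasHalfLapAt u x L` means that the principal-value limit defining
`(-Δ)^{1/2} u (x)` exists and equals `L`. -/
def HasHalfLapAt (u : ℝ → ℝ) (x L : ℝ) : Prop :=
  Tendsto (fun δ => pvHalfLap u x δ) (nhdsWithin 0 (Ioi 0)) (nhds L)

open Topology

noncomputable def Gaux (μ a z : ℝ) : ℝ :=
  -(Real.log ((μ^2+(a+z)^2)/μ^2))/z + (2*a/(a^2+μ^2)) * Real.log z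
   - (a/(a^2+μ^2)) * Real.log ((z+a)^2+μ^2) + (2*μ/(a^2+μ^2)) * Real.arctan ((z+a)/μ)

lemma hasDerivAt_Gaux {μ : ℝ} (a : ℝ) (hμ : 0 < μ) {z : ℝ} (hz : 0 < z) :
    HasDerivAt (Gaux μ a) (Real.log ((μ^2+(a+z)^2)/μ^2) / z^2) z := by
  have h1 : (0:ℝ) < μ^2+(a+z)^2 := by positivity
  have h2 : (0:ℝ) < (z+a)^2+μ^2 := by positivity
  have h3 : (0:ℝ) < a^2+μ^2 := by positivity
  have dinner : HasDerivAt (fun z : ℝ => (μ^2+(a+z)^2)/μ^2)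
      ((2*(a+z)^1*1)/μ^2) z := by
    exact ((((hasDerivAt_id z).const_add a).pow 2).const_add (μ^2)).div_const (μ^2)
  have dlog1 : HasDerivAt (fun z : ℝ => Real.log ((μ^2+(a+z)^2)/μ^2))
      ((2*(a+z)^1*1)/μ^2 / ((μ^2+(a+z)^2)/μ^2)) z :=
    dinner.log (by positivity)
  have dterm1 : HasDerivAt (fun z : ℝ => -(Real.log ((μ^2+(a+z)^2)/μ^2))/z)
      ((-((2*(a+z)^1*1)/μ^2 / ((μ^2+(a+z)^2)/μ^2)) * z - -(Real.log ((μ^2+(a+z)^2)/μ^2)) * 1) / z^2) z :=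
    dlog1.neg.div (hasDerivAt_id z) hz.ne'
  have dterm2 : HasDerivAt (fun z : ℝ => (2*a/(a^2+μ^2)) * Real.log z)
      ((2*a/(a^2+μ^2)) * z⁻¹) z := (Real.hasDerivAt_log hz.ne').const_mul _
  have dlog2 : HasDerivAt (fun z : ℝ => (z+a)^2+μ^2) (2*(z+a)^1*1) z :=
    (((hasDerivAt_id z).add_const a).pow 2).add_const (μ^2)
  have dterm3 : HasDerivAt (fun z : ℝ => (a/(a^2+μ^2)) * Real.log ((z+a)^2+μ^2))
      ((a/(a^2+μ^2)) * ((2*(z+a)^1*1) / ((z+a)^2+μ^2))) z :=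
    (dlog2.log h2.ne').const_mul _
  have darctan : HasDerivAt (fun z : ℝ => (2*μ/(a^2+μ^2)) * Real.arctan ((z+a)/μ))
      ((2*μ/(a^2+μ^2)) * ((1 / (1 + ((z+a)/μ)^2)) * (1/μ))) z := by
    have : HasDerivAt (fun z : ℝ => (z+a)/μ) (1/μ) z := by
      simpa using ((hasDerivAt_id z).add_const a).div_const μ
    exact ((Real.hasDerivAt_arctan ((z+a)/μ)).comp z this).const_mul _
  have := ((dterm1.add dterm2).sub dterm3).add darctan
  refine this.congr_deriv (Eq.symm ?_)
  have hzne : z ≠ 0 := hz.ne'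
  have hμne : μ ≠ 0 := hμ.ne'
  field_simp
  ring

lemma tendsto_Gaux_atTop {μ : ℝ} (a : ℝ) (hμ : 0 < μ) :
    Tendsto (Gaux μ a) atTop (𝓝 ((2*μ/(a^2+μ^2)) * (Real.pi/2))) := by
  have hinvz : ∀ c : ℝ, Tendsto (fun z : ℝ => c/z) atTop (𝓝 0) :=
    fun c => tendsto_const_nhds.div_atTop tendsto_id
  have hratio : Tendsto (fun z : ℝ => z^2/((z+a)^2+μ^2)) atTop (𝓝 1) := by
    have ha : Tendsto (fun z : ℝ => 1 + a/z) atTop (𝓝 (1+0)) :=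
      tendsto_const_nhds.add (hinvz a)
    have hden : Tendsto (fun z : ℝ => (1+a/z)^2 + (μ/z)^2) atTop (𝓝 ((1+0)^2+0^2)) :=
      (ha.pow 2).add ((hinvz μ).pow 2)
    have h1 : Tendsto (fun z : ℝ => 1 / ((1+a/z)^2 + (μ/z)^2)) atTop (𝓝 (1/((1+0)^2+0^2))) :=
      tendsto_const_nhds.div hden (by norm_num)
    norm_num at h1
    refine h1.congr' ?_
    filter_upwards [eventually_gt_atTop (0:ℝ)] with z hz
    have hzne : z ≠ 0 := hz.ne'
    have h : (1+a/z)^2+(μ/z)^2 = ((z+a)^2+μ^2)/z^2 := by field_simp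
    rw [h, inv_div]
  have hp1 : Tendsto (fun z : ℝ => -(Real.log ((μ^2+(a+z)^2)/μ^2))/z) atTop (𝓝 0) := by
    have hr2 : Tendsto (fun z : ℝ => (μ^2+(a+z)^2)/(μ^2*z^2)) atTop (𝓝 ((0^2+(0+1)^2)/μ^2)) := by
      have : Tendsto (fun z : ℝ => ((μ/z)^2+(a/z+1)^2)/μ^2) atTop (𝓝 ((0^2+(0+1)^2)/μ^2)) :=
        Tendsto.div_const (((hinvz μ).pow 2).add (((hinvz a).add tendsto_const_nhds).pow 2)) _
      refine this.congr' ?_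
      filter_upwards [eventually_gt_atTop (0:ℝ)] with z hz
      have hzne : z ≠ 0 := hz.ne'
      have h : (μ/z)^2+(a/z+1)^2 = (μ^2+(a+z)^2)/z^2 := by field_simp
      rw [h]; ring
    norm_num at hr2
    have hlog2 : Tendsto (fun z : ℝ => Real.log ((μ^2+(a+z)^2)/(μ^2*z^2))) atTop
        (𝓝 (Real.log ((μ^2)⁻¹))) :=
      (Real.continuousAt_log (by positivity)).tendsto.comp hr2
    have hlogz : Tendsto (fun z : ℝ => Real.log z / z) atTop (𝓝 0) :=
      Real.isLittleO_log_id_atTop.tendsto_div_nhds_zero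
    have hinv : Tendsto (fun z : ℝ => z⁻¹) atTop (𝓝 0) := tendsto_inv_atTop_zero
    have key : Tendsto (fun z : ℝ => -(Real.log ((μ^2+(a+z)^2)/(μ^2*z^2)) * z⁻¹ + 2 * (Real.log z / z)))
        atTop (𝓝 (-(Real.log ((μ^2)⁻¹) * 0 + 2*0))) :=
      ((hlog2.mul hinv).add (hlogz.const_mul 2)).neg
    norm_num at key
    refine key.congr' ?_
    filter_upwards [eventually_gt_atTop (0:ℝ)] with z hz
    have h1 : (0:ℝ) < μ^2+(a+z)^2 := by positivity
    rw [show (μ^2+(a+z)^2)/(μ^2*z^2) = ((μ^2+(a+z)^2)/μ^2) / z^2 by ring,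
        Real.log_div (by positivity) (by positivity), Real.log_pow]
    push_cast
    have hzne : z ≠ 0 := hz.ne'
    field_simp
    ring
  have hp2 : Tendsto (fun z : ℝ => (2*a/(a^2+μ^2)) * Real.log z
      - (a/(a^2+μ^2)) * Real.log ((z+a)^2+μ^2)) atTop (𝓝 0) := by
    have hlog : Tendsto (fun z : ℝ => (a/(a^2+μ^2)) * Real.log (z^2/((z+a)^2+μ^2))) atTop
        (𝓝 ((a/(a^2+μ^2)) * Real.log 1)) :=
      ((Real.continuousAt_log one_ne_zero).tendsto.comp hratio).const_mul _
    rw [Real.log_one, mul_zero] at hlog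
    refine hlog.congr' ?_
    filter_upwards [eventually_gt_atTop (0:ℝ)] with z hz
    have h2 : (0:ℝ) < (z+a)^2+μ^2 := by positivity
    rw [Real.log_div (by positivity) h2.ne', Real.log_pow]
    push_cast
    ring
  have hp3 : Tendsto (fun z : ℝ => (2*μ/(a^2+μ^2)) * Real.arctan ((z+a)/μ)) atTop
      (𝓝 ((2*μ/(a^2+μ^2)) * (Real.pi/2))) := by
    have hzt : Tendsto (fun z : ℝ => (z+a)/μ) atTop atTop :=
      (tendsto_atTop_add_const_right _ a tendsto_id).atTop_div_const hμ
    exact ((tendsto_nhds_of_tendsto_nhdsWithin Real.tendsto_arctan_atTop).comp hzt).const_mul _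
  have hsum := (hp1.add hp2).add hp3
  rw [show (0:ℝ) + 0 + (2*μ/(a^2+μ^2)) * (Real.pi/2) = (2*μ/(a^2+μ^2)) * (Real.pi/2) by ring] at hsum
  exact hsum.congr (fun z => by unfold Gaux; ring)

lemma pnonneg {μ : ℝ} (a : ℝ) (hμ : 0 < μ) (z : ℝ) :
    0 ≤ Real.log ((μ^2+(a+z)^2)/μ^2) / z^2 := by
  refine div_nonneg (Real.log_nonneg ?_) (sq_nonneg z)
  rw [le_div_iff₀ (by positivity)]
  nlinarith [sq_nonneg (a+z)]

lemma p_integrableOn {μ a δ : ℝ} (hμ : 0 < μ) (hδ : 0 < δ) :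
    IntegrableOn (fun z => Real.log ((μ^2+(a+z)^2)/μ^2) / z^2) (Ioi δ) :=
  integrableOn_Ioi_deriv_of_nonneg' (fun z hz => hasDerivAt_Gaux a hμ (hδ.trans_le hz))
    (fun z _ => pnonneg a hμ z) (tendsto_Gaux_atTop a hμ)

lemma p_integral {μ a δ : ℝ} (hμ : 0 < μ) (hδ : 0 < δ) :
    ∫ z in Ioi δ, Real.log ((μ^2+(a+z)^2)/μ^2) / z^2 =
      (2*μ/(a^2+μ^2)) * (Real.pi/2) - Gaux μ a δ :=
  integral_Ioi_of_hasDerivAt_of_nonneg' (fun z hz => hasDerivAt_Gaux a hμ (hδ.trans_le hz))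
    (fun z _ => pnonneg a hμ z) (tendsto_Gaux_atTop a hμ)

lemma hasDerivAt_negcz (c : ℝ) {z : ℝ} (hz : z ≠ 0) :
    HasDerivAt (fun z : ℝ => -(c * z⁻¹)) (c / z^2) z := by
  have := ((hasDerivAt_inv hz).const_mul c).neg
  refine this.congr_deriv (Eq.symm ?_)
  field_simp

lemma q_integrableOn {c δ : ℝ} (hc : 0 ≤ c) (hδ : 0 < δ) :
    IntegrableOn (fun z : ℝ => c / z^2) (Ioi δ) :=
  integrableOn_Ioi_deriv_of_nonneg'
    (fun z hz => hasDerivAt_negcz c (hδ.trans_le hz).ne')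
    (fun z hz => by positivity)
    (by simpa using (tendsto_inv_atTop_zero.const_mul c).neg)

lemma q_integral {c δ : ℝ} (hc : 0 ≤ c) (hδ : 0 < δ) :
    ∫ z in Ioi δ, c / z^2 = c / δ := by
  rw [integral_Ioi_of_hasDerivAt_of_nonneg'
    (fun z hz => hasDerivAt_negcz c (hδ.trans_le hz).ne')
    (fun z hz => by positivity)
    (by simpa using (tendsto_inv_atTop_zero.const_mul c).neg)]
  field_simp; ring

lemma integrableOn_Iic_comp_neg {f : ℝ → ℝ} {c : ℝ}
    (h : IntegrableOn (fun x => f (-x)) (Ioi c)) : IntegrableOn f (Iic (-c)) := by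
  have A : MeasurableEmbedding fun x : ℝ => -x :=
    (Homeomorph.neg ℝ).isClosedEmbedding.measurableEmbedding
  have h' : IntegrableOn (fun x => f (-x)) (Ici c) :=
    (Iff.mpr integrableOn_Ici_iff_integrableOn_Ioi) h
  rw [IntegrableOn, ← Measure.map_neg_eq_self (volume : Measure ℝ),
    Measure.restrict_map A.measurable measurableSet_Iic, A.integrable_map_iff]
  have : (fun x : ℝ => -x) ⁻¹' Iic (-c) = Ici c := by
    ext y; simp [neg_le]
  rw [this]
  exact h'

lemma tendsto_err {μ : ℝ} (a : ℝ) (hμ : 0 < μ) :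
    Tendsto (fun δ => Gaux μ a δ + Gaux μ (-a) δ + 2 * Real.log ((μ^2+a^2)/μ^2) / δ)
      (𝓝[>] (0:ℝ)) (𝓝 0) := by
  set c := Real.log ((μ^2+a^2)/μ^2) with hc
  have h1 : (0:ℝ) < μ^2+a^2 := by positivity
  -- pointwise identity
  have key : ∀ δ : ℝ, Gaux μ a δ + Gaux μ (-a) δ + 2*c/δ =
      (2*c - Real.log ((μ^2+(a+δ)^2)/μ^2) - Real.log ((μ^2+(a-δ)^2)/μ^2))/δ
      - (a/(a^2+μ^2)) * (Real.log ((δ+a)^2+μ^2) - Real.log ((δ-a)^2+μ^2))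
      + (2*μ/(a^2+μ^2)) * (Real.arctan ((δ+a)/μ) + Real.arctan ((δ-a)/μ)) := by
    intro δ
    unfold Gaux
    rw [show (-a+δ:ℝ) = -(a-δ) by ring, neg_sq (a-δ), show (δ + -a : ℝ) = δ - a by ring,
      neg_sq a]
    ring
  -- slope piece
  set φ : ℝ → ℝ := fun t => Real.log ((μ^2+(a+t)^2)/μ^2) + Real.log ((μ^2+(a-t)^2)/μ^2) with hφ
  have hφ0 : φ 0 = 2*c := by simp [hφ, hc]; ring
  have hd : HasDerivAt φ 0 0 := by
    have d1 : HasDerivAt (fun t : ℝ => (μ^2+(a+t)^2)/μ^2) ((2*(a+(0:ℝ))^1*1)/μ^2) 0 :=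
      ((((hasDerivAt_id (0:ℝ)).const_add a).pow 2).const_add (μ^2)).div_const (μ^2)
    have d2 : HasDerivAt (fun t : ℝ => (μ^2+(a-t)^2)/μ^2) ((2*(a-(0:ℝ))^1*(-1))/μ^2) 0 := by
      have : HasDerivAt (fun t : ℝ => a - t) (-1) 0 := (hasDerivAt_id (0:ℝ)).const_sub a
      exact (((this.pow 2).const_add (μ^2)).div_const (μ^2))
    have hl1 : ((μ:ℝ)^2+(a+0)^2)/μ^2 ≠ 0 := by positivity
    have hl2 : ((μ:ℝ)^2+(a-0)^2)/μ^2 ≠ 0 := by positivity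
    have := (d1.log hl1).add (d2.log hl2)
    refine this.congr_deriv (Eq.symm ?_)
    norm_num
    field_simp
    ring
  have hslope : Tendsto (fun δ : ℝ => (2*c - Real.log ((μ^2+(a+δ)^2)/μ^2)
      - Real.log ((μ^2+(a-δ)^2)/μ^2))/δ) (𝓝[>] (0:ℝ)) (𝓝 0) := by
    have hs := (hasDerivAt_iff_tendsto_slope.mp hd).mono_left
      (nhdsWithin_mono 0 (fun y (hy : y ∈ Ioi (0:ℝ)) => ne_of_gt hy))
    have := hs.neg
    rw [neg_zero] at this
    refine this.congr' ?_
    filter_upwards [self_mem_nhdsWithin] with δ (hδ : (0:ℝ) < δ)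
    rw [slope_def_field, hφ0]
    simp only [hφ, sub_zero]
    ring
  -- continuous pieces
  have hB : Tendsto (fun δ : ℝ => (a/(a^2+μ^2)) *
      (Real.log ((δ+a)^2+μ^2) - Real.log ((δ-a)^2+μ^2))) (𝓝[>] (0:ℝ)) (𝓝 0) := by
    have l1 : Tendsto (fun δ : ℝ => Real.log ((δ+a)^2+μ^2)) (𝓝 0)
        (𝓝 (Real.log ((0+a)^2+μ^2))) := by
      refine (Real.continuousAt_log (by positivity)).tendsto.comp ?_
      exact (((continuous_id.add continuous_const).pow 2).add continuous_const).tendsto 0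
    have l2 : Tendsto (fun δ : ℝ => Real.log ((δ-a)^2+μ^2)) (𝓝 0)
        (𝓝 (Real.log ((0-a)^2+μ^2))) := by
      refine (Real.continuousAt_log (by positivity)).tendsto.comp ?_
      exact (((continuous_id.sub continuous_const).pow 2).add continuous_const).tendsto 0
    have := ((l1.sub l2).const_mul (a/(a^2+μ^2))).mono_left (nhdsWithin_le_nhds (s := Ioi (0:ℝ)))
    rw [show (0+a:ℝ)^2+μ^2 = (0-a)^2+μ^2 by ring, sub_self, mul_zero] at this
    exact this
  have hC : Tendsto (fun δ : ℝ => (2*μ/(a^2+μ^2)) *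
      (Real.arctan ((δ+a)/μ) + Real.arctan ((δ-a)/μ))) (𝓝[>] (0:ℝ))
      (𝓝 ((2*μ/(a^2+μ^2)) * (Real.arctan ((0+a)/μ) + Real.arctan ((0-a)/μ)))) := by
    refine Tendsto.mono_left ?_ (nhdsWithin_le_nhds (s := Ioi (0:ℝ)))
    refine Tendsto.const_mul _ (Tendsto.add ?_ ?_)
    · exact Real.continuous_arctan.tendsto _ |>.comp
        (((continuous_id.add continuous_const).div_const μ).tendsto 0)
    · exact Real.continuous_arctan.tendsto _ |>.comp
        (((continuous_id.sub continuous_const).div_const μ).tendsto 0)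
  rw [show (0+a:ℝ)/μ = a/μ by ring, show (0-a:ℝ)/μ = -(a/μ) by ring, Real.arctan_neg,
    add_neg_cancel, mul_zero] at hC
  have hsum := (hslope.sub hB).add hC
  rw [sub_zero, add_zero] at hsum
  refine hsum.congr' ?_
  filter_upwards [self_mem_nhdsWithin] with δ _
  rw [key δ]

/-- Every bubble `𝒰_{μ,ξ}(y) = log(2μ/(μ² + (y-ξ)²))` is a classical solution of the
Liouville equation `(-Δ)^{1/2} u = e^u` on `ℝ`. -/
theorem bubble_solves_liouville (μ ξ : ℝ) (hμ : 0 < μ) (x : ℝ) :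
    HasHalfLapAt (fun y => Real.log (2 * μ / (μ ^ 2 + (y - ξ) ^ 2))) x
      (Real.exp (Real.log (2 * μ / (μ ^ 2 + (x - ξ) ^ 2)))) ∧
    Real.exp (Real.log (2 * μ / (μ ^ 2 + (x - ξ) ^ 2))) =
      2 * μ / (μ ^ 2 + (x - ξ) ^ 2) := by
  have he : Real.exp (Real.log (2 * μ / (μ ^ 2 + (x - ξ) ^ 2))) =
      2 * μ / (μ ^ 2 + (x - ξ) ^ 2) := Real.exp_log (by positivity)
  refine ⟨?_, he⟩
  rw [HasHalfLapAt, he]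
  set a : ℝ := x - ξ with ha
  set c : ℝ := Real.log ((μ^2+a^2)/μ^2) with hc
  have hcpos : 0 ≤ c := Real.log_nonneg (by rw [le_div_iff₀ (by positivity)]; nlinarith)
  set p : ℝ → ℝ := fun z => Real.log ((μ^2+(a+z)^2)/μ^2) / z^2 with hp
  set p' : ℝ → ℝ := fun z => Real.log ((μ^2+(-a+z)^2)/μ^2) / z^2 with hp'
  set q : ℝ → ℝ := fun z : ℝ => c / z^2 with hq
  -- rewrite the integrand
  have hfun : (fun z : ℝ => ((fun y => Real.log (2 * μ / (μ ^ 2 + (y - ξ) ^ 2))) x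
      - (fun y => Real.log (2 * μ / (μ ^ 2 + (y - ξ) ^ 2))) (x + z)) / z ^ 2)
      = fun z => p z - q z := by
    funext z
    simp only [hp, hq, hc]
    have e1 : x + z - ξ = a + z := by rw [ha]; ring
    have e2 : x - ξ = a := ha.symm
    rw [e1, e2, Real.log_div (by positivity) (by positivity),
      Real.log_div (by positivity) (by positivity),
      Real.log_div (by positivity) (by positivity),
      Real.log_div (by positivity) (by positivity)]
    ring
  -- evaluate the truncated integral for each δ > 0
  have hval : ∀ δ : ℝ, δ ∈ Ioi (0:ℝ) →
      pvHalfLap (fun y => Real.log (2 * μ / (μ ^ 2 + (y - ξ) ^ 2))) x δ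
      = (1/Real.pi) * ((2*μ/(a^2+μ^2)) * Real.pi
          - (Gaux μ a δ + Gaux μ (-a) δ + 2*c/δ)) := by
    intro δ (hδ : 0 < δ)
    rw [pvHalfLap, hfun]
    have hS : {z : ℝ | δ ≤ |z|} = Iic (-δ) ∪ Ici δ := by
      ext z
      simp only [mem_setOf_eq, mem_union, mem_Iic, mem_Ici, le_abs, le_neg]
      tauto
    have hneg : (fun z : ℝ => p (-z) - q (-z)) = fun z => p' z - q z := by
      funext z
      simp only [hp, hp', hq]
      rw [show a + -z = -(-a+z) by ring, neg_sq, neg_sq]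
    have hIci : IntegrableOn (fun z => p z - q z) (Ici δ) :=
      (Iff.mpr integrableOn_Ici_iff_integrableOn_Ioi)
        ((p_integrableOn hμ hδ).sub (q_integrableOn hcpos hδ))
    have hIic : IntegrableOn (fun z => p z - q z) (Iic (-δ)) := by
      refine integrableOn_Iic_comp_neg ?_
      rw [hneg]
      exact (p_integrableOn hμ hδ).sub (q_integrableOn hcpos hδ)
    have hdisj : Disjoint (Iic (-δ)) (Ici δ) := by
      refine disjoint_left.mpr (fun z hz1 hz2 => ?_)
      simp only [mem_Iic, mem_Ici] at hz1 hz2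
      linarith
    rw [hS, setIntegral_union hdisj measurableSet_Ici hIic hIci]
    have hIciv : ∫ z in Ici δ, (p z - q z) =
        ((2*μ/(a^2+μ^2)) * (Real.pi/2) - Gaux μ a δ) - c/δ := by
      rw [integral_Ici_eq_integral_Ioi,
        integral_sub ((p_integrableOn hμ hδ)) (q_integrableOn hcpos hδ),
        p_integral hμ hδ, q_integral hcpos hδ]
    have hIicv : ∫ z in Iic (-δ), (p z - q z) =
        ((2*μ/(a^2+μ^2)) * (Real.pi/2) - Gaux μ (-a) δ) - c/δ := by
      calc ∫ z in Iic (-δ), (p z - q z)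
          = ∫ z in Ioi δ, (p (-z) - q (-z)) := (integral_comp_neg_Ioi δ _).symm
        _ = ∫ z in Ioi δ, (p' z - q z) := by rw [hneg]
        _ = ((2*μ/((-a)^2+μ^2)) * (Real.pi/2) - Gaux μ (-a) δ) - c/δ := by
            rw [integral_sub (p_integrableOn (a := -a) hμ hδ) (q_integrableOn hcpos hδ),
              p_integral (a := -a) hμ hδ, q_integral hcpos hδ]
        _ = ((2*μ/(a^2+μ^2)) * (Real.pi/2) - Gaux μ (-a) δ) - c/δ := by rw [neg_sq]
    rw [hIciv, hIicv]
    ring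
  -- take the limit
  have herr := tendsto_err a hμ
  have hlim : Tendsto (fun δ => (1/Real.pi) * ((2*μ/(a^2+μ^2)) * Real.pi
      - (Gaux μ a δ + Gaux μ (-a) δ + 2*c/δ))) (𝓝[>] (0:ℝ))
      (𝓝 ((1/Real.pi) * ((2*μ/(a^2+μ^2)) * Real.pi - 0))) :=
    (tendsto_const_nhds.sub herr).const_mul _
  have hvalg : (1/Real.pi) * ((2*μ/(a^2+μ^2)) * Real.pi - 0) = 2 * μ / (μ ^ 2 + (x - ξ) ^ 2) := by
    rw [sub_zero, ← ha]
    have : Real.pi ≠ 0 := Real.pi_ne_zero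
    field_simp
    ring
  rw [hvalg] at hlim
  refine hlim.congr' ?_
  filter_upwards [self_mem_nhdsWithin] with δ hδ
  exact (hval δ hδ).symm
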